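/- Let a and b be coprime positive integers and k ≥ 0. Then the sum of all nonnegative integers with at most k representations in the form ma + nb (m, n ∈ ℕ) equals (1/2)a²b²k² + (1/2)(ab - a - b)abk + (1/6)a²b² - (1/4)(a + b - 1)ab + (1/12)(a² + b² - 1); that is, 12·∑_{j ∈ ℕ∖S_k(a,b)} j = 6a²b²k² + 6(ab-a-b)abk + 2a²b² - 3(a+b-1)ab + (a² + b² - 1). -/

import Mathlib

open Finset

/-- `repCount a b j` is the number of representations of `j` in the form
`m * a + n * b` with `m, n : ℕ`. -/
noncomputable def repCount (a b j : ℕ) : ℕ :=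
  Nat.card {p : ℕ × ℕ // p.1 * a + p.2 * b = j}


lemma gauss1 (n : ℕ) : 2 * ∑ i ∈ range n, (i : ℤ) = n * (n - 1) := by
  induction n with
  | zero => simp
  | succ n ih => rw [sum_range_succ]; push_cast; push_cast at ih; ring_nf; ring_nf at ih; linarith

lemma gauss2 (n : ℕ) : 6 * ∑ i ∈ range n, (i : ℤ)^2 = n * (n - 1) * (2 * n - 1) := by
  induction n with
  | zero => simp
  | succ n ih => rw [sum_range_succ]; push_cast; push_cast at ih; ring_nf; ring_nf at ih; linarith

lemma mul_mod_inj (a b : ℕ) (hab : Nat.Coprime a b) :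
    ∀ x ∈ range b, ∀ y ∈ range b, x * a % b = y * a % b → x = y := by
  intro x hx y hy h
  have h2 : x ≡ y [MOD b] := Nat.ModEq.cancel_right_of_coprime (c := a) hab.symm h
  have hx' := mem_range.mp hx
  have hy' := mem_range.mp hy
  unfold Nat.ModEq at h2
  rw [Nat.mod_eq_of_lt hx', Nat.mod_eq_of_lt hy'] at h2
  exact h2

lemma image_mul_mod (a b : ℕ) (hb : 0 < b) (hab : Nat.Coprime a b) :
    (range b).image (fun m => m * a % b) = range b := by
  apply Finset.eq_of_subset_of_card_le
  · intro x hx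
    simp only [mem_image] at hx
    obtain ⟨m, _, rfl⟩ := hx
    exact mem_range.mpr (Nat.mod_lt _ hb)
  · rw [Finset.card_image_of_injOn (mul_mod_inj a b hab)]

lemma repCount_eq_card (a b n : ℕ) (ha : 0 < a) (hb : 0 < b) :
    repCount a b n =
      ((range (n+1) ×ˢ range (n+1)).filter (fun p => p.1 * a + p.2 * b = n)).card := by
  rw [repCount]
  have hset : {p : ℕ × ℕ | p.1 * a + p.2 * b = n} =
      ↑((range (n+1) ×ˢ range (n+1)).filter (fun p => p.1 * a + p.2 * b = n)) := by
    ext p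
    simp only [Set.mem_setOf_eq, coe_filter, mem_product, mem_range, Set.mem_setOf_eq]
    constructor
    · intro h
      refine ⟨⟨?_, ?_⟩, h⟩
      · have : p.1 ≤ p.1 * a := Nat.le_mul_of_pos_right _ ha
        omega
      · have : p.2 ≤ p.2 * b := Nat.le_mul_of_pos_right _ hb
        omega
    · exact fun h => h.2
  have : Nat.card {p : ℕ × ℕ // p.1 * a + p.2 * b = n} =
      Nat.card {p : ℕ × ℕ // p ∈ ((range (n+1) ×ˢ range (n+1)).filter (fun p => p.1 * a + p.2 * b = n))} := by
    apply Nat.card_congr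
    apply Equiv.subtypeEquiv (Equiv.refl _)
    intro p
    constructor
    · intro h
      have : p ∈ ({p : ℕ × ℕ | p.1 * a + p.2 * b = n} : Set (ℕ × ℕ)) := h
      rw [hset] at this; exact this
    · intro h
      have : p ∈ ({p : ℕ × ℕ | p.1 * a + p.2 * b = n} : Set (ℕ × ℕ)) := by rw [hset]; exact h
      exact this
  rw [this, Nat.card_eq_finsetCard]

lemma mem_mod_eq (a b m n : ℕ) (hab : Nat.Coprime a b) (hm : m < b)
    (hcong : m * a % b = n % b) (p : ℕ × ℕ) (hp : p.1 * a + p.2 * b = n) :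
    p.1 % b = m := by
  have h1 : n % b = p.1 * a % b := by
    rw [← hp]; exact Nat.add_mul_mod_self_right _ _ _
  have h2 : (p.1 % b) * a % b = m * a % b := by
    rw [hcong, h1, Nat.mod_mul_mod]
  exact mul_mod_inj a b hab _ (mem_range.mpr (Nat.mod_lt _ (by omega))) _
    (mem_range.mpr hm) h2

lemma repCount_formula (a b : ℕ) (ha : 0 < a) (hb : 0 < b) (hab : Nat.Coprime a b)
    (m n : ℕ) (hm : m < b) (hcong : m * a % b = n % b) :
    repCount a b n = if m * a ≤ n then (n - m * a) / (a * b) + 1 else 0 := by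
  rw [repCount_eq_card a b n ha hb]
  by_cases hcase : m * a ≤ n
  · rw [if_pos hcase, ← Finset.card_range ((n - m * a) / (a * b) + 1)]
    have hdvd0 : b ∣ n - m * a := (Nat.modEq_iff_dvd' hcase).mp hcong
    apply Finset.card_bij' (fun p _ => p.1 / b)
      (fun t _ => (m + t * b, (n - (m + t * b) * a) / b))
    · -- hi : maps into range
      intro p hp
      simp only [mem_filter, mem_product, mem_range] at hp
      obtain ⟨⟨h1, h2⟩, heq⟩ := hp
      have hmod : p.1 % b = m := mem_mod_eq a b m n hab hm hcong p heq
      have hd : p.1 % b + b * (p.1 / b) = p.1 := Nat.mod_add_div _ _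
      have hd' : m + b * (p.1 / b) = p.1 := by omega
      have hmul : (p.1 / b) * (a * b) = p.1 * a - m * a := by
        have e1 : (m + b * (p.1/b)) * a = m * a + (p.1/b) * (a * b) := by ring
        have e2 : p.1 * a = (m + b * (p.1/b)) * a := by rw [hd']
        omega
      have hle : p.1 * a ≤ n := by omega
      have : (p.1 / b) * (a * b) ≤ n - m * a := by
        have : m * a ≤ p.1 * a := Nat.mul_le_mul_right _ (by omega)
        omega
      rw [mem_range]
      have := (Nat.le_div_iff_mul_le (by positivity : 0 < a * b)).mpr this
      omega
    · -- hj : maps back into the filter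
      intro t ht
      rw [mem_range] at ht
      have htle : t * (a * b) ≤ n - m * a :=
        (Nat.le_div_iff_mul_le (by positivity : 0 < a * b)).mp (by omega)
      have h1 : (m + t * b) * a = m * a + t * (a * b) := by ring
      have hle : (m + t * b) * a ≤ n := by omega
      have hdvd : b ∣ n - (m + t * b) * a := by
        have e : n - (m + t * b) * a = (n - m * a) - (t * a) * b := by
          have : t * (a*b) = (t*a)*b := by ring
          omega
        rw [e]
        exact Nat.dvd_sub hdvd0 (dvd_mul_left b (t*a))
      have hmulcan : (n - (m + t * b) * a) / b * b = n - (m + t * b) * a :=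
        Nat.div_mul_cancel hdvd
      simp only [mem_filter, mem_product, mem_range]
      refine ⟨⟨?_, ?_⟩, ?_⟩
      · have : (m + t * b) ≤ (m + t * b) * a := Nat.le_mul_of_pos_right _ ha
        omega
      · have : (n - (m + t * b) * a) / b * b ≤ n := by omega
        have h2 : (n - (m + t * b) * a) / b ≤ (n - (m + t * b) * a) / b * b :=
          Nat.le_mul_of_pos_right _ hb
        omega
      · omega
    · -- left inverse
      intro p hp
      simp only [mem_filter, mem_product, mem_range] at hp
      obtain ⟨⟨h1, h2⟩, heq⟩ := hp
      have hmod : p.1 % b = m := mem_mod_eq a b m n hab hm hcong p heq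
      have hd : p.1 % b + b * (p.1 / b) = p.1 := Nat.mod_add_div _ _
      have hcomm : b * (p.1 / b) = (p.1 / b) * b := mul_comm _ _
      have hfst : m + (p.1 / b) * b = p.1 := by omega
      have hsnd : (n - (m + (p.1 / b) * b) * a) / b = p.2 := by
        rw [hfst]
        have : n - p.1 * a = p.2 * b := by omega
        rw [this, Nat.mul_div_cancel _ hb]
      ext
      · simp [hfst]
      · simp [hsnd]
    · -- right inverse
      intro t ht
      simp only
      rw [Nat.add_mul_div_right _ _ hb, Nat.div_eq_of_lt hm]
      omega
  · rw [if_neg hcase, Finset.card_eq_zero]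
    rw [Finset.eq_empty_iff_forall_notMem]
    intro p hp
    simp only [mem_filter, mem_product, mem_range] at hp
    obtain ⟨⟨h1, h2⟩, heq⟩ := hp
    have hmod : p.1 % b = m := mem_mod_eq a b m n hab hm hcong p heq
    have : m ≤ p.1 := hmod ▸ Nat.mod_le _ _
    have : m * a ≤ p.1 * a := Nat.mul_le_mul_right _ this
    omega

lemma repCount_le_iff (a b : ℕ) (ha : 0 < a) (hb : 0 < b) (hab : Nat.Coprime a b)
    (k m n : ℕ) (hm : m < b) (hcong : m * a % b = n % b) :
    repCount a b n ≤ k ↔ n < m * a + k * (a * b) := by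
  rw [repCount_formula a b ha hb hab m n hm hcong]
  split_ifs with h
  · have hd : (n - m * a) / (a * b) < k ↔ n - m * a < k * (a * b) :=
      Nat.div_lt_iff_lt_mul (by positivity)
    omega
  · simp only [Nat.zero_le, true_iff]
    omega

/-- The finset of naturals with at most `k` representations. -/
def NkF (a b k : ℕ) : Finset ℕ :=
  (range b).biUnion (fun m => (range (k * a + m * a / b)).image (fun s => m * a % b + s * b))

lemma setOf_repCount_le (a b k : ℕ) (ha : 0 < a) (hb : 0 < b) (hab : Nat.Coprime a b) :
    {j : ℕ | repCount a b j ≤ k} = ↑(NkF a b k) := by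
  ext n
  simp only [Set.mem_setOf_eq, NkF, coe_biUnion, mem_coe, mem_range, Set.mem_iUnion,
    mem_image, mem_biUnion]
  constructor
  · intro h
    -- find m < b with m * a % b = n % b
    have hmem : n % b ∈ (range b).image (fun m => m * a % b) := by
      rw [image_mul_mod a b hb hab]
      exact mem_range.mpr (Nat.mod_lt _ hb)
    simp only [mem_image, mem_range] at hmem
    obtain ⟨m, hm, hcong⟩ := hmem
    refine ⟨m, hm, n / b, ?_, ?_⟩
    · -- n / b < k * a + m * a / b
      rw [repCount_le_iff a b ha hb hab k m n hm hcong] at h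
      have hd1 : b * (m * a / b) + m * a % b = m * a := Nat.div_add_mod _ _
      have hd2 : b * (n / b) + n % b = n := Nat.div_add_mod _ _
      by_contra hc
      push_neg at hc
      have : (k * a + m * a / b) * b ≤ (n / b) * b := Nat.mul_le_mul_right _ hc
      have e1 : (k * a + m * a / b) * b = k * (a * b) + b * (m * a / b) := by ring
      have e2 : (n / b) * b = b * (n / b) := by ring
      omega
    · have hd2 : b * (n / b) + n % b = n := Nat.div_add_mod _ _
      have : b * (n / b) = (n / b) * b := mul_comm _ _
      omega
  · rintro ⟨m, hm, s, hs, rfl⟩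
    have hlt : m * a % b < b := Nat.mod_lt _ hb
    have hcong : m * a % b = (m * a % b + s * b) % b := by
      rw [Nat.add_mul_mod_self_right, Nat.mod_eq_of_lt hlt]
    rw [repCount_le_iff a b ha hb hab k m _ hm hcong]
    have h1 : s * b < (k * a + m * a / b) * b := (Nat.mul_lt_mul_right hb).mpr hs
    have e1 : (k * a + m * a / b) * b = k * (a * b) + b * (m * a / b) := by ring
    have hd1 : b * (m * a / b) + m * a % b = m * a := Nat.div_add_mod _ _
    omega

theorem s_le_k_eq (a b k : ℕ) (ha : 0 < a) (hb : 0 < b) (hab : Nat.Coprime a b) :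
    12 * (∑ᶠ j ∈ {j : ℕ | repCount a b j ≤ k}, (j : ℤ)) =
      6 * (a : ℤ) ^ 2 * (b : ℤ) ^ 2 * (k : ℤ) ^ 2 +
        6 * ((a : ℤ) * b - a - b) * a * b * k +
        2 * (a : ℤ) ^ 2 * (b : ℤ) ^ 2 - 3 * ((a : ℤ) + b - 1) * a * b +
        ((a : ℤ) ^ 2 + (b : ℤ) ^ 2 - 1) := by
  rw [setOf_repCount_le a b k ha hb hab, finsum_mem_coe_finset, NkF]
  have hdisj : (↑(range b) : Set ℕ).PairwiseDisjoint
      (fun m => (range (k * a + m * a / b)).image (fun s => m * a % b + s * b)) := by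
    intro x hx y hy hxy
    simp only [coe_range, Set.mem_Iio] at hx hy
    refine Finset.disjoint_left.mpr ?_
    intro z hzx hzy
    simp only [mem_image, mem_range] at hzx hzy
    obtain ⟨s, _, rfl⟩ := hzx
    obtain ⟨s', _, he⟩ := hzy
    apply hxy
    have h1 : (x * a % b + s * b) % b = x * a % b := by
      rw [Nat.add_mul_mod_self_right, Nat.mod_eq_of_lt (Nat.mod_lt _ hb)]
    have h2 : (y * a % b + s' * b) % b = y * a % b := by
      rw [Nat.add_mul_mod_self_right, Nat.mod_eq_of_lt (Nat.mod_lt _ hb)]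
    exact mul_mod_inj a b hab x (mem_range.mpr hx) y (mem_range.mpr hy)
      (by rw [← h1, ← h2, he])
  rw [Finset.sum_biUnion hdisj]
  have himg : ∀ m ∈ range b,
      ∑ x ∈ (range (k * a + m * a / b)).image (fun s => m * a % b + s * b), (x : ℤ)
      = ∑ s ∈ range (k * a + m * a / b), ((m * a % b : ℕ) + (s : ℤ) * b) := by
    intro m _
    rw [Finset.sum_image]
    · apply Finset.sum_congr rfl
      intro s _
      push_cast
      ring
    · intro s _ s' _ h
      have := Nat.eq_of_mul_eq_mul_right hb (show s * b = s' * b by simp only at h; omega)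
      exact this
  rw [Finset.sum_congr rfl himg, Finset.mul_sum]
  have h12 : ∀ m ∈ range b,
      12 * ∑ s ∈ range (k * a + m * a / b), ((m * a % b : ℕ) + (s : ℤ) * b)
      = 12 * (k * a + m * a / b : ℕ) * (m * a % b : ℕ)
        + 6 * ((k * a + m * a / b : ℕ) : ℤ) * (((k * a + m * a / b : ℕ) : ℤ) - 1) * b := by
    intro m _
    rw [Finset.sum_add_distrib, Finset.sum_const, card_range, nsmul_eq_mul, ← Finset.sum_mul]
    have hg := gauss1 (k * a + m * a / b)
    linear_combination (6 * (b : ℤ)) * hg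
  rw [Finset.sum_congr rfl h12]
  -- cancel b^2
  have hb2 : ((b : ℤ))^2 ≠ 0 := pow_ne_zero 2 (by exact_mod_cast hb.ne')
  apply mul_left_cancel₀ hb2
  rw [Finset.mul_sum]
  have hterm : ∀ m ∈ range b,
      (b : ℤ)^2 * (12 * (k * a + m * a / b : ℕ) * (m * a % b : ℕ)
        + 6 * ((k * a + m * a / b : ℕ) : ℤ) * (((k * a + m * a / b : ℕ) : ℤ) - 1) * b)
      = (6*(k:ℤ)^2*(a:ℤ)^2*(b:ℤ)^3 - 6*(k:ℤ)*(a:ℤ)*(b:ℤ)^3)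
        + (12*(k:ℤ)*(a:ℤ)^2*(b:ℤ)^2 - 6*(a:ℤ)*(b:ℤ)^2) * (m:ℤ)
        + (6*(a:ℤ)^2*(b:ℤ)) * (m:ℤ)^2
        + 6*(b:ℤ)^2 * ((m * a % b : ℕ) : ℤ) - 6*(b:ℤ) * ((m * a % b : ℕ) : ℤ)^2 := by
    intro m _
    have hq : ((m:ℤ) * a) = (b : ℤ) * ((m * a / b : ℕ) : ℤ) + ((m * a % b : ℕ) : ℤ) := by
      exact_mod_cast (Nat.div_add_mod (m * a) b).symm
    have hT : ((k * a + m * a / b : ℕ) : ℤ) = (k:ℤ) * (a:ℤ) + ((m * a / b : ℕ) : ℤ) := by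
      rw [Nat.cast_add, Nat.cast_mul]
    rw [hT]
    linear_combination (-6*(b:ℤ)*(2*(k:ℤ)*a*b + (m:ℤ)*a - b + (b:ℤ)*((m * a / b : ℕ) : ℤ)
      + ((m * a % b : ℕ) : ℤ))) * hq
  rw [Finset.sum_congr rfl hterm]
  have hsplit : ∑ m ∈ range b,
      ((6*(k:ℤ)^2*(a:ℤ)^2*(b:ℤ)^3 - 6*(k:ℤ)*(a:ℤ)*(b:ℤ)^3)
        + (12*(k:ℤ)*(a:ℤ)^2*(b:ℤ)^2 - 6*(a:ℤ)*(b:ℤ)^2) * (m:ℤ)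
        + (6*(a:ℤ)^2*(b:ℤ)) * (m:ℤ)^2
        + 6*(b:ℤ)^2 * ((m * a % b : ℕ) : ℤ) - 6*(b:ℤ) * ((m * a % b : ℕ) : ℤ)^2)
      = (b:ℤ) * (6*(k:ℤ)^2*(a:ℤ)^2*(b:ℤ)^3 - 6*(k:ℤ)*(a:ℤ)*(b:ℤ)^3)
        + (12*(k:ℤ)*(a:ℤ)^2*(b:ℤ)^2 - 6*(a:ℤ)*(b:ℤ)^2) * (∑ i ∈ range b, (i:ℤ))
        + (6*(a:ℤ)^2*(b:ℤ)) * (∑ i ∈ range b, (i:ℤ)^2)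
        + 6*(b:ℤ)^2 * (∑ m ∈ range b, ((m * a % b : ℕ) : ℤ))
        - 6*(b:ℤ) * (∑ m ∈ range b, ((m * a % b : ℕ) : ℤ)^2) := by
    rw [Finset.sum_sub_distrib, Finset.sum_add_distrib, Finset.sum_add_distrib,
      Finset.sum_add_distrib, ← Finset.mul_sum, ← Finset.mul_sum, ← Finset.mul_sum,
      ← Finset.mul_sum, Finset.sum_const, card_range, nsmul_eq_mul]
  rw [hsplit]
  have hperm1 : ∑ m ∈ range b, ((m * a % b : ℕ) : ℤ) = ∑ i ∈ range b, (i : ℤ) := by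
    conv_rhs => rw [← image_mul_mod a b hb hab]
    rw [Finset.sum_image (mul_mod_inj a b hab)]
  have hperm2 : ∑ m ∈ range b, ((m * a % b : ℕ) : ℤ)^2 = ∑ i ∈ range b, (i : ℤ)^2 := by
    conv_rhs => rw [← image_mul_mod a b hb hab]
    rw [Finset.sum_image (mul_mod_inj a b hab)]
  rw [hperm1, hperm2]
  linear_combination (6*(k:ℤ)*(a:ℤ)^2*(b:ℤ)^2 - 3*(a:ℤ)*(b:ℤ)^2 + 3*(b:ℤ)^2) * gauss1 b
    + ((b:ℤ)*((a:ℤ)^2-1)) * gauss2 b
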